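/- For every λ ≥ 1, every f ∈ E_λ has a representative that extends to an entire function on ℂ^d: there exists an entire (complex analytic) function F : ℂ^d → ℂ such that F(x) = f(x) for Lebesgue-almost every x ∈ ℝ^d. -/

import Mathlib

open MeasureTheory Real Set
open scoped BigOperators ENNReal RealInnerProductSpace

noncomputable section

/-- Physicists' Hermite polynomials `H_n`, via the recursion
`H_0 = 1`, `H_{n+1}(x) = 2 x H_n(x) - H_n'(x)`. -/
def physHermite : ℕ → Polynomial ℝ
  | 0 => 1
  | n + 1 => 2 * Polynomial.X * physHermite n - Polynomial.derivative (physHermite n)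

/-- The `L²`-normalized Hermite functions on `ℝ`:
`h_n(t) = (2^n n! √π)^{-1/2} H_n(t) e^{-t²/2}`. -/
def hermiteFun (n : ℕ) (t : ℝ) : ℝ :=
  ((2 : ℝ) ^ n * (n.factorial : ℝ) * Real.sqrt π) ^ (-(1 : ℝ) / 2) *
    (physHermite n).eval t * Real.exp (-t ^ 2 / 2)

/-- The tensor Hermite function `Φ_α(y) = ∏_j h_{α_j}(y_j)` on `ℝ^{d₁}`. -/
def hermiteProd {d₁ : ℕ} (α : Fin d₁ → ℕ) (y : EuclideanSpace ℝ (Fin d₁)) : ℝ :=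
  ∏ j, hermiteFun (α j) (y j)

/-- `g : ℝ^n → ℂ` has Fourier transform (convention `ĝ(ξ) = c ∫ g(x) e^{-i x·ξ} dx`)
supported in the closed Euclidean ball of radius `r`:  `g` is pointwise the inverse
Fourier integral of a square-integrable function vanishing outside that ball. -/
def Bandlimited {n : ℕ} (r : ℝ) (g : EuclideanSpace ℝ (Fin n) → ℂ) : Prop :=
  ∃ F : EuclideanSpace ℝ (Fin n) → ℂ,
    MemLp F 2 volume ∧
    (∀ ξ, ξ ∉ Metric.closedBall (0 : EuclideanSpace ℝ (Fin n)) r → F ξ = 0) ∧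
    ∀ z, g z = ∫ ξ, F ξ * Complex.exp (Complex.I * ((inner ℝ ξ z : ℝ) : ℂ))

set_option synthInstance.maxHeartbeats 1000000
set_option maxHeartbeats 1000000

def hermiteC (k : ℕ) (w : ℂ) : ℂ :=
  (((2 : ℝ) ^ k * (k.factorial : ℝ) * Real.sqrt π) ^ (-(1 : ℝ) / 2) : ℝ) *
    ((physHermite k).map Complex.ofRealHom).eval w * Complex.exp (-w ^ 2 / 2)

lemma hermiteC_analytic (k : ℕ) : AnalyticOnNhd ℂ (hermiteC k) Set.univ := by
  have hd : Differentiable ℂ (hermiteC k) := by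
    apply Differentiable.mul
    · exact (differentiable_const _).mul (Polynomial.differentiable _)
    · exact Complex.differentiable_exp.comp (((differentiable_pow 2).neg).div_const 2)
  exact hd.differentiableOn.analyticOnNhd isOpen_univ

lemma hermiteC_real (k : ℕ) (t : ℝ) : hermiteC k (t : ℂ) = (hermiteFun k t : ℂ) := by
  unfold hermiteC hermiteFun
  rw [Polynomial.eval_map]
  rw [show ((t : ℂ)) = Complex.ofRealHom t from rfl, Polynomial.eval₂_at_apply]
  simp only [Complex.ofRealHom_eq_coe]
  push_cast
  ring

/-- The complex-linear pairing `v ↦ ∑ j ξ_j v_j`. -/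
def Lpair {n : ℕ} (ξ : EuclideanSpace ℝ (Fin n)) : EuclideanSpace ℂ (Fin n) →L[ℂ] ℂ :=
  ∑ j, ((ξ j : ℂ)) • (EuclideanSpace.proj j : EuclideanSpace ℂ (Fin n) →L[ℂ] ℂ)

lemma Lpair_apply {n : ℕ} (ξ : EuclideanSpace ℝ (Fin n)) (v : EuclideanSpace ℂ (Fin n)) :
    Lpair ξ v = ∑ j, (ξ j : ℂ) * v j := by
  simp [Lpair, ContinuousLinearMap.sum_apply]

lemma Lpair_cont {n : ℕ} : Continuous (fun ξ : EuclideanSpace ℝ (Fin n) => Lpair ξ) := by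
  refine continuous_finset_sum _ fun j _ => ?_
  exact (Complex.continuous_ofReal.comp (EuclideanSpace.proj j : EuclideanSpace ℝ (Fin n) →L[ℝ] ℝ).continuous).smul continuous_const

lemma EuclideanSpace.coord_norm_le {𝕜 : Type*} [RCLike 𝕜] {n : ℕ} (v : EuclideanSpace 𝕜 (Fin n)) (j : Fin n) :
    ‖v j‖ ≤ ‖v‖ := by
  have : ‖v j‖ = Real.sqrt (‖v j‖ ^ 2) := (Real.sqrt_sq (norm_nonneg _)).symm
  rw [this, EuclideanSpace.norm_eq]
  exact Real.sqrt_le_sqrt (Finset.single_le_sum (f := fun i => ‖v i‖ ^ 2)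
    (fun i _ => sq_nonneg _) (Finset.mem_univ j))

lemma Lpair_norm_le {n : ℕ} (ξ : EuclideanSpace ℝ (Fin n)) : ‖Lpair ξ‖ ≤ n * ‖ξ‖ := by
  refine (norm_sum_le _ _).trans ?_
  have h : ∀ j : Fin n,
      ‖((ξ j : ℂ)) • (EuclideanSpace.proj j : EuclideanSpace ℂ (Fin n) →L[ℂ] ℂ)‖ ≤ ‖ξ‖ := by
    intro j
    refine ContinuousLinearMap.opNorm_le_bound _ (norm_nonneg ξ) fun v => ?_
    rw [ContinuousLinearMap.smul_apply, norm_smul]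
    rw [show (EuclideanSpace.proj j) v = v j from rfl]
    have h1 : ‖(ξ j : ℂ)‖ ≤ ‖ξ‖ := by
      rw [Complex.norm_real]; exact EuclideanSpace.coord_norm_le ξ j |>.trans_eq' rfl
    exact mul_le_mul h1 (EuclideanSpace.coord_norm_le v j) (norm_nonneg _) (norm_nonneg _)
  calc ∑ j, ‖((ξ j : ℂ)) • (EuclideanSpace.proj j : EuclideanSpace ℂ (Fin n) →L[ℂ] ℂ)‖
      ≤ ∑ _j : Fin n, ‖ξ‖ := Finset.sum_le_sum fun j _ => h j
    _ = n * ‖ξ‖ := by simp [Finset.sum_const, Finset.card_univ]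

open Complex in
lemma bandlimited_entire {n : ℕ} {r : ℝ} (hr : 0 ≤ r) (g : EuclideanSpace ℝ (Fin n) → ℂ)
    (hg : Bandlimited r g) :
    ∃ G : EuclideanSpace ℂ (Fin n) → ℂ, AnalyticOnNhd ℂ G Set.univ ∧
      ∀ z : EuclideanSpace ℝ (Fin n), G (WithLp.toLp 2 (fun j => (z j : ℂ))) = g z := by
  obtain ⟨F, hF2, hFsupp, hFrep⟩ := hg
  -- integrability of F
  have hFint : Integrable F volume := by
    have hsupp : ∀ ξ, ξ ∉ Metric.closedBall (0 : EuclideanSpace ℝ (Fin n)) r → F ξ = 0 := hFsupp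
    have : MemLp F 1 volume := by
      refine hF2.mono_exponent_of_measure_support_ne_top hsupp ?_ (by norm_num)
      exact (MeasureTheory.measure_closedBall_lt_top).ne
    exact memLp_one_iff_integrable.mp this
  set A : ℝ := ∫ ξ, ‖F ξ‖ with hA
  have hA0 : 0 ≤ A := integral_nonneg fun ξ => norm_nonneg _
  set C : ℝ := n * r with hC
  have hC0 : 0 ≤ C := mul_nonneg (Nat.cast_nonneg n) hr
  -- the multilinear integrands
  set M : ∀ m : ℕ, EuclideanSpace ℝ (Fin n) →
      ContinuousMultilinearMap ℂ (fun _ : Fin m => EuclideanSpace ℂ (Fin n)) ℂ :=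
    fun m ξ => (ContinuousMultilinearMap.mkPiAlgebraFin ℂ m ℂ).compContinuousLinearMap
      (fun _ => Lpair ξ) with hM
  set Φ : ∀ m : ℕ, EuclideanSpace ℝ (Fin n) →
      ContinuousMultilinearMap ℂ (fun _ : Fin m => EuclideanSpace ℂ (Fin n)) ℂ :=
    fun m ξ => (F ξ * (Complex.I ^ m / (m.factorial : ℂ))) • M m ξ with hΦ
  have hMcont : ∀ m, Continuous (M m) := by
    intro m
    have : Continuous (fun ξ : EuclideanSpace ℝ (Fin n) => (fun _ : Fin m => Lpair ξ)) :=
      continuous_pi fun _ => Lpair_cont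
    exact ((ContinuousMultilinearMap.mkPiAlgebraFin ℂ m ℂ).compContinuousLinearMapLRight).cont.comp this
  have hMnorm : ∀ m ξ, ξ ∈ Metric.closedBall (0 : EuclideanSpace ℝ (Fin n)) r →
      ‖M m ξ‖ ≤ C ^ m := by
    intro m ξ hξ
    refine (ContinuousMultilinearMap.norm_compContinuousLinearMap_le _ _).trans ?_
    have hLξ : ‖Lpair ξ‖ ≤ C := by
      refine (Lpair_norm_le ξ).trans ?_
      have : ‖ξ‖ ≤ r := by simpa using Metric.mem_closedBall.mp hξ
      exact mul_le_mul_of_nonneg_left this (Nat.cast_nonneg n)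
    calc ‖ContinuousMultilinearMap.mkPiAlgebraFin ℂ m ℂ‖ * ∏ _i : Fin m, ‖Lpair ξ‖
        ≤ 1 * ∏ _i : Fin m, ‖Lpair ξ‖ := by
          refine mul_le_mul_of_nonneg_right ?_ (Finset.prod_nonneg fun _ _ => norm_nonneg _)
          simpa using ContinuousMultilinearMap.norm_mkPiAlgebraFin_le (𝕜 := ℂ) (n := m) (A := ℂ)
      _ = ‖Lpair ξ‖ ^ m := by simp [Finset.prod_const, Finset.card_univ]
      _ ≤ C ^ m := pow_le_pow_left₀ (norm_nonneg _) hLξ m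
  have hΦnorm : ∀ m ξ, ‖Φ m ξ‖ ≤ ‖F ξ‖ * (C ^ m / (m.factorial : ℝ)) := by
    intro m ξ
    by_cases hξ : ξ ∈ Metric.closedBall (0 : EuclideanSpace ℝ (Fin n)) r
    · rw [hΦ]; dsimp only
      rw [norm_smul (F ξ * (Complex.I ^ m / (m.factorial : ℂ))) (M m ξ)]
      have h1 : ‖F ξ * (Complex.I ^ m / (m.factorial : ℂ))‖ = ‖F ξ‖ / (m.factorial : ℝ) := by
        rw [norm_mul, norm_div, norm_pow, Complex.norm_I, one_pow]
        simp [Complex.norm_natCast, div_eq_mul_inv]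
      rw [h1]
      calc ‖F ξ‖ / (m.factorial : ℝ) * ‖M m ξ‖
          ≤ ‖F ξ‖ / (m.factorial : ℝ) * C ^ m := by
            exact mul_le_mul_of_nonneg_left (hMnorm m ξ hξ)
              (div_nonneg (norm_nonneg _) (Nat.cast_nonneg _))
        _ = ‖F ξ‖ * (C ^ m / (m.factorial : ℝ)) := by ring
    · have h0 : F ξ = 0 := hFsupp ξ hξ
      rw [hΦ]; dsimp only
      simp [h0]
      exact zero_smul ℂ (M m ξ)
  have hΦmeas : ∀ m, AEStronglyMeasurable (Φ m) volume := fun m =>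
    (hF2.1.mul_const _).smul (hMcont m).aestronglyMeasurable
  have hbound_int : ∀ c : ℝ, Integrable (fun ξ => ‖F ξ‖ * c) volume :=
    fun c => hFint.norm.mul_const _
  have hΦint : ∀ m, Integrable (Φ m) volume := fun m =>
    (hbound_int _).mono' (hΦmeas m) (Filter.Eventually.of_forall fun ξ => hΦnorm m ξ)
  set p : FormalMultilinearSeries ℂ (EuclideanSpace ℂ (Fin n)) ℂ :=
    fun m => ∫ ξ, Φ m ξ with hp
  have hpnorm : ∀ m, ‖p m‖ ≤ A * (C ^ m / (m.factorial : ℝ)) := by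
    intro m
    refine (norm_integral_le_integral_norm _).trans ?_
    calc ∫ ξ, ‖Φ m ξ‖
        ≤ ∫ ξ, ‖F ξ‖ * (C ^ m / (m.factorial : ℝ)) :=
          integral_mono (hΦint m).norm (hbound_int _) (fun ξ => hΦnorm m ξ)
      _ = A * (C ^ m / (m.factorial : ℝ)) := by rw [integral_mul_const]
  have hradius : p.radius = ⊤ := by
    apply FormalMultilinearSeries.radius_eq_top_of_summable_norm
    intro ρ
    have hs : Summable (fun m : ℕ => A * ((C * ρ) ^ m / (m.factorial : ℝ))) :=
      (Real.summable_pow_div_factorial (C * ρ)).mul_left A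
    refine Summable.of_nonneg_of_le
      (fun m => mul_nonneg (norm_nonneg _) (pow_nonneg ρ.2 m)) (fun m => ?_) hs
    calc ‖p m‖ * (ρ : ℝ) ^ m
        ≤ (A * (C ^ m / (m.factorial : ℝ))) * (ρ : ℝ) ^ m :=
          mul_le_mul_of_nonneg_right (hpnorm m) (pow_nonneg ρ.2 m)
      _ = A * ((C * ρ) ^ m / (m.factorial : ℝ)) := by rw [mul_pow]; ring
  set G : EuclideanSpace ℂ (Fin n) → ℂ :=
    fun v => ∫ ξ, F ξ * Complex.exp (Complex.I * Lpair ξ v) with hG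
  have hsum : ∀ v : EuclideanSpace ℂ (Fin n),
      HasSum (fun m => p m (fun _ => v)) (G v) := by
    intro v
    set u : ℕ → EuclideanSpace ℝ (Fin n) → ℂ :=
      fun m ξ => F ξ * ((Complex.I * Lpair ξ v) ^ m / (m.factorial : ℂ)) with hu
    have hLv : ∀ ξ, ξ ∈ Metric.closedBall (0 : EuclideanSpace ℝ (Fin n)) r →
        ‖Lpair ξ v‖ ≤ C * ‖v‖ := by
      intro ξ hξ
      refine (ContinuousLinearMap.le_opNorm _ _).trans ?_
      refine mul_le_mul_of_nonneg_right ?_ (norm_nonneg v)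
      refine (Lpair_norm_le ξ).trans ?_
      have : ‖ξ‖ ≤ r := by simpa using Metric.mem_closedBall.mp hξ
      exact mul_le_mul_of_nonneg_left this (Nat.cast_nonneg n)
    have hunorm : ∀ m ξ, ‖u m ξ‖ ≤ ‖F ξ‖ * ((C * ‖v‖) ^ m / (m.factorial : ℝ)) := by
      intro m ξ
      by_cases hξ : ξ ∈ Metric.closedBall (0 : EuclideanSpace ℝ (Fin n)) r
      · rw [hu]; dsimp only
        rw [norm_mul, norm_div, norm_pow, norm_mul, Complex.norm_I, one_mul,
          Complex.norm_natCast]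
        refine mul_le_mul_of_nonneg_left ?_ (norm_nonneg _)
        gcongr
        exact hLv ξ hξ
      · rw [hu]; dsimp only
        rw [hFsupp ξ hξ]
        simp
    have humeas : ∀ m, AEStronglyMeasurable (u m) volume := by
      intro m
      apply hF2.1.mul
      apply Continuous.aestronglyMeasurable
      apply Continuous.div_const
      apply Continuous.pow
      exact continuous_const.mul
        ((ContinuousLinearMap.apply ℂ ℂ v).continuous.comp Lpair_cont)
    have huint : ∀ m, Integrable (u m) volume := fun m =>
      (hbound_int _).mono' (humeas m) (Filter.Eventually.of_forall fun ξ => hunorm m ξ)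
    have husum : Summable fun m => ∫ ξ, ‖u m ξ‖ := by
      have hs : Summable (fun m : ℕ => A * ((C * ‖v‖) ^ m / (m.factorial : ℝ))) :=
        (Real.summable_pow_div_factorial (C * ‖v‖)).mul_left A
      refine Summable.of_nonneg_of_le
        (fun m => integral_nonneg fun ξ => norm_nonneg _) (fun m => ?_) hs
      calc ∫ ξ, ‖u m ξ‖
          ≤ ∫ ξ, ‖F ξ‖ * ((C * ‖v‖) ^ m / (m.factorial : ℝ)) :=
            integral_mono (huint m).norm (hbound_int _) (fun ξ => hunorm m ξ)
        _ = A * ((C * ‖v‖) ^ m / (m.factorial : ℝ)) := by rw [integral_mul_const]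
    have hkey := MeasureTheory.hasSum_integral_of_summable_integral_norm huint husum
    have happ : ∀ m, p m (fun _ => v) = ∫ ξ, u m ξ := by
      intro m
      rw [hp]; dsimp only
      rw [ContinuousMultilinearMap.integral_apply (hΦint m)]
      congr 1; funext ξ
      rw [hΦ, hu]; dsimp only
      rw [ContinuousMultilinearMap.smul_apply,
        ContinuousMultilinearMap.compContinuousLinearMap_apply,
        ContinuousMultilinearMap.mkPiAlgebraFin_apply, List.prod_ofFn,
        Finset.prod_const, Finset.card_univ, Fintype.card_fin, smul_eq_mul, mul_pow]
      ring
    have htsum : ∀ ξ, (∑' m, u m ξ) = F ξ * Complex.exp (Complex.I * Lpair ξ v) := by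
      intro ξ
      have he : HasSum (fun m => (Complex.I * Lpair ξ v) ^ m / (m.factorial : ℂ))
          (Complex.exp (Complex.I * Lpair ξ v)) := by
        rw [Complex.exp_eq_exp_ℂ]
        exact NormedSpace.expSeries_div_hasSum_exp (Complex.I * Lpair ξ v)
      exact (he.mul_left (F ξ)).tsum_eq
    have : (∫ ξ, ∑' m, u m ξ) = G v := by
      rw [hG]; exact integral_congr_ae (Filter.Eventually.of_forall fun ξ => htsum ξ)
    rw [← this]
    simpa only [happ] using hkey
  have hball : HasFPowerSeriesOnBall G p 0 ⊤ :=
    ⟨by rw [hradius], ENNReal.zero_lt_top, fun {y} _ => by simpa using hsum y⟩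
  refine ⟨G, fun w _ => hball.analyticAt_of_mem (by simp [EMetric.mem_ball]), ?_⟩
  intro z
  rw [hG]; dsimp only
  rw [hFrep z]
  congr 1; funext ξ
  congr 2
  rw [Lpair_apply]
  rw [show (inner ℝ ξ z : ℝ) = ∑ j, ξ j * z j from by
    simp [PiLp.inner_apply, RCLike.inner_apply, conj_trivial, mul_comm]]
  push_cast
  rfl

/-- The first `d₁` coordinates of a point of `ℝ^{d₁+d₂}`. -/
def fstC (d₁ d₂ : ℕ) (x : EuclideanSpace ℝ (Fin (d₁ + d₂))) : EuclideanSpace ℝ (Fin d₁) :=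
  WithLp.toLp 2 (fun i => x (Fin.castAdd d₂ i))

/-- The last `d₂` coordinates of a point of `ℝ^{d₁+d₂}`. -/
def sndC (d₁ d₂ : ℕ) (x : EuclideanSpace ℝ (Fin (d₁ + d₂))) : EuclideanSpace ℝ (Fin d₂) :=
  WithLp.toLp 2 (fun j => x (Fin.natAdd d₁ j))

/-- Gluing `y ∈ ℝ^{d₁}` and `z ∈ ℝ^{d₂}` to the point `(y,z) ∈ ℝ^{d₁+d₂}`. -/
def glue {d₁ d₂ : ℕ} (y : EuclideanSpace ℝ (Fin d₁)) (z : EuclideanSpace ℝ (Fin d₂)) :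
    EuclideanSpace ℝ (Fin (d₁ + d₂)) :=
  WithLp.toLp 2 (fun i => Fin.addCases (fun i₁ => y i₁) (fun j => z j) i)

/-- Degree `|α|` of a multiindex. -/
def mdeg {n : ℕ} (α : Fin n → ℕ) : ℕ := ∑ i, α i

/-- Factorial `α!` of a multiindex. -/
def mfact {n : ℕ} (α : Fin n → ℕ) : ℕ := ∏ i, (α i).factorial

/-- The spectral subspace `E_λ = Ran 1_{(-∞,λ]}(-Δ + |y|²)` on `L²(ℝ^{d₁+d₂})`, realized
concretely as the set of (smooth representatives of) functions of the form
`f(y,z) = Σ_{2|α|+d₁ ≤ λ} Φ_α(y) g_α(z)` with each `g_α` square-integrable with Fourier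
transform supported in the closed ball of radius `(λ - 2|α| - d₁)^{1/2}`. -/
def SpecSubspace (d₁ d₂ : ℕ) (lam : ℝ) (f : EuclideanSpace ℝ (Fin (d₁ + d₂)) → ℂ) : Prop :=
  ∃ (S : Finset (Fin d₁ → ℕ)) (g : (Fin d₁ → ℕ) → EuclideanSpace ℝ (Fin d₂) → ℂ),
    (∀ α ∈ S, 2 * (mdeg α : ℝ) + d₁ ≤ lam) ∧
    (∀ α ∈ S, Bandlimited (Real.sqrt (lam - (2 * (mdeg α : ℝ) + d₁))) (g α)) ∧
    ∀ x, f x = ∑ α ∈ S, (hermiteProd α (fstC d₁ d₂ x) : ℂ) * g α (sndC d₁ d₂ x)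

/-- The open cube `Λ_L(x) = x + (-L/2, L/2)^n`. -/
def cube {n : ℕ} (L : ℝ) (x : EuclideanSpace ℝ (Fin n)) : Set (EuclideanSpace ℝ (Fin n)) :=
  {y | ∀ i, |y i - x i| < L / 2}

/-- First-order partial derivative in coordinate `i`. -/
def pderiv1 {n : ℕ} (i : Fin n) (f : EuclideanSpace ℝ (Fin n) → ℂ) :
    EuclideanSpace ℝ (Fin n) → ℂ :=
  fun x => fderiv ℝ f x (EuclideanSpace.single i 1)

/-- Iterated partial derivatives along a list of coordinates. -/
def listDeriv {n : ℕ} : List (Fin n) → (EuclideanSpace ℝ (Fin n) → ℂ) →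
    EuclideanSpace ℝ (Fin n) → ℂ
  | [], f => f
  | i :: is, f => pderiv1 i (listDeriv is f)

/-- The partial derivative `∂^α` for a multiindex `α`. -/
def mderiv {n : ℕ} (α : Fin n → ℕ) (f : EuclideanSpace ℝ (Fin n) → ℂ) :
    EuclideanSpace ℝ (Fin n) → ℂ :=
  listDeriv ((List.finRange n).flatMap fun i => List.replicate (α i) i) f

/-- `C_B(m,λ) = 2^m ∏_{k=0}^{m-1} (λ + 2k)`. -/
def CB (m : ℕ) (lam : ℝ) : ℝ := 2 ^ m * ∏ k ∈ Finset.range m, (lam + 2 * k)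

/-- `(Q_k)_{k ∈ ι}` is an (at most countable) essential covering of `ℝ^n` by measurable
sets, of multiplicity at most `κ`. -/
def IsEssentialCovering {n : ℕ} {ι : Type*} (Q : ι → Set (EuclideanSpace ℝ (Fin n)))
    (κ : ℝ) : Prop :=
  Countable ι ∧ (∀ k, MeasurableSet (Q k)) ∧
    volume ((Set.univ : Set (EuclideanSpace ℝ (Fin n))) \ ⋃ k, Q k) = 0 ∧
    ∀ x, ∑' k, (Q k).indicator (fun _ => (1 : ℝ≥0∞)) x ≤ ENNReal.ofReal κ

/-- The set `K_c` of indices whose `Q_k` meets `B(0, Cλ^{1/2}) × ℝ^{d₂}`, where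
`C = 32 d₁ (1 + √(log κ))`. -/
def coveringCore (d₁ d₂ : ℕ) {ι : Type*} (Q : ι → Set (EuclideanSpace ℝ (Fin (d₁ + d₂))))
    (κ lam : ℝ) : Set ι :=
  {k | (Q k ∩ {x | fstC d₁ d₂ x ∈
      Metric.ball (0 : EuclideanSpace ℝ (Fin d₁))
        (32 * d₁ * (1 + Real.sqrt (Real.log κ)) * Real.sqrt lam)}).Nonempty}

/-- The set `K_g` of good indices for `f`: those `k` for which the localized
Bernstein-type inequality holds on `Q_k` for all `m ≥ 1`. -/
def goodIdx (d₁ d₂ : ℕ) {ι : Type*} (Q : ι → Set (EuclideanSpace ℝ (Fin (d₁ + d₂))))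
    (κ lam : ℝ) (f : EuclideanSpace ℝ (Fin (d₁ + d₂)) → ℂ) : Set ι :=
  {k | ∀ m : ℕ, 1 ≤ m →
    ∑ α ∈ Finset.Nat.antidiagonalTuple (d₁ + d₂) m,
        (1 / (mfact α : ℝ)) * ∫ x in Q k, ‖mderiv α f x‖ ^ 2 ≤
      2 ^ (m + 1) * κ * (CB m lam / m.factorial) * ∫ x in Q k, ‖f x‖ ^ 2}

/-- Embedding `ℝ^n ↪ ℂ^n`. -/
def cembed {n : ℕ} (x : EuclideanSpace ℝ (Fin n)) : EuclideanSpace ℂ (Fin n) :=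
  WithLp.toLp 2 (fun i => (x i : ℂ))

/-- The set `Q(x) = B(x^{(1)}, ρ(x^{(1)})) × Λ_L(x^{(2)})`. -/
def QSet (d₁ d₂ : ℕ) (ρ : EuclideanSpace ℝ (Fin d₁) → ℝ) (L : ℝ)
    (x : EuclideanSpace ℝ (Fin (d₁ + d₂))) : Set (EuclideanSpace ℝ (Fin (d₁ + d₂))) :=
  {w | fstC d₁ d₂ w ∈ Metric.ball (fstC d₁ d₂ x) (ρ (fstC d₁ d₂ x)) ∧
    sndC d₁ d₂ w ∈ cube L (sndC d₁ d₂ x)}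

/-- The operator `P g = -Σ_{j ∈ J} ∂_j² g + (Σ_{i ∈ I} x_i²) g + #(I∩J) · g`. -/
def Pop {n : ℕ} (I J : Finset (Fin n)) (f : EuclideanSpace ℝ (Fin n) → ℂ) :
    EuclideanSpace ℝ (Fin n) → ℂ :=
  fun x => -(∑ j ∈ J, pderiv1 j (pderiv1 j f) x) +
    ((∑ i ∈ I, (x i) ^ 2 : ℝ) : ℂ) * f x + ((I ∩ J).card : ℂ) * f x

/-- **Analytic extension of spectral subspace functions** (part of Corollary A.4 /
`cor:specfamH`). For every `λ ≥ 1`, every `f ∈ E_λ` has a representative extending to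
an entire function on `ℂ^d`. -/
theorem spectral_subspace_entire_extension
    (d₁ d₂ : ℕ) (hd₁ : 1 ≤ d₁) (lam : ℝ) (hlam : 1 ≤ lam)
    (f : EuclideanSpace ℝ (Fin (d₁ + d₂)) → ℂ) (hf : SpecSubspace d₁ d₂ lam f) :
    ∃ F : EuclideanSpace ℂ (Fin (d₁ + d₂)) → ℂ,
      AnalyticOnNhd ℂ F Set.univ ∧
        ∀ᵐ x : EuclideanSpace ℝ (Fin (d₁ + d₂)) ∂volume, F (cembed x) = f x := by
  obtain ⟨S, g, hS, hband, hrep⟩ := hf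
  have key : ∀ α : Fin d₁ → ℕ, ∃ G : EuclideanSpace ℂ (Fin d₂) → ℂ,
      AnalyticOnNhd ℂ G Set.univ ∧
        (α ∈ S → ∀ z : EuclideanSpace ℝ (Fin d₂), G (WithLp.toLp 2 (fun j => (z j : ℂ))) = g α z) := by
    intro α
    by_cases hα : α ∈ S
    · obtain ⟨G, h1, h2⟩ := bandlimited_entire (Real.sqrt_nonneg _) (g α) (hband α hα)
      exact ⟨G, h1, fun _ => h2⟩
    · exact ⟨fun _ => 0, analyticOnNhd_const, fun h => absurd h hα⟩
  choose G hGa hGr using key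
  let π2 : EuclideanSpace ℂ (Fin (d₁ + d₂)) →L[ℂ] EuclideanSpace ℂ (Fin d₂) :=
    LinearMap.toContinuousLinearMap
      { toFun := fun w => (WithLp.toLp 2 (fun j => w (Fin.natAdd d₁ j)) : EuclideanSpace ℂ (Fin d₂)),
        map_add' := fun _ _ => rfl, map_smul' := fun _ _ => rfl }
  refine ⟨fun w => ∑ α ∈ S, (∏ j, hermiteC (α j) (w (Fin.castAdd d₂ j))) * G α (π2 w), ?_, ?_⟩
  · have hfn : (fun w : EuclideanSpace ℂ (Fin (d₁ + d₂)) =>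
        ∑ α ∈ S, (∏ j, hermiteC (α j) (w (Fin.castAdd d₂ j))) * G α (π2 w)) =
        ∑ α ∈ S, fun w => (∏ j, hermiteC (α j) (w (Fin.castAdd d₂ j))) * G α (π2 w) := by
      ext w; simp [Finset.sum_apply]
    rw [hfn]
    refine Finset.analyticOnNhd_sum S fun α _ => ?_
    refine AnalyticOnNhd.mul ?_ ?_
    · refine Finset.analyticOnNhd_fun_prod _ fun j _ => ?_
      exact (hermiteC_analytic (α j)).comp
        ((EuclideanSpace.proj (Fin.castAdd d₂ j) :
          EuclideanSpace ℂ (Fin (d₁ + d₂)) →L[ℂ] ℂ).analyticOnNhd _) (Set.mapsTo_univ _ _)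
    · exact (hGa α).comp (π2.analyticOnNhd _) (Set.mapsTo_univ _ _)
  · refine Filter.Eventually.of_forall fun x => ?_
    rw [hrep x]
    refine Finset.sum_congr rfl fun α hα => ?_
    congr 1
    · calc ∏ j, hermiteC (α j) ((cembed x) (Fin.castAdd d₂ j))
          = ∏ j, ((hermiteFun (α j) (x (Fin.castAdd d₂ j)) : ℝ) : ℂ) :=
            Finset.prod_congr rfl fun j _ => hermiteC_real _ _
        _ = ((hermiteProd α (fstC d₁ d₂ x) : ℝ) : ℂ) := by
            rw [hermiteProd, Complex.ofReal_prod]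
            rfl
    · exact hGr α hα (sndC d₁ d₂ x)
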